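/- Let α > 0, let λ₁ < λ₂ < … < λ_d < −α/2, and let z ∈ (−∞, 0)^d. Define f : ℝ≥0 → ℝ by f(x) := (Σ_{j=1}^d z_j λ_j e^{λ_j x}) / (1 − Σ_{j=1}^d z_j e^{λ_j x}). Then the denominator satisfies 1 − Σ_{j=1}^d z_j e^{λ_j x} ≥ 1 > 0 for all x ≥ 0, f is continuously differentiable on ℝ≥0, and |f(0)|² + ∫₀^∞ |f′(x)|² e^{α x} dx < ∞ (so that f belongs to the forward curve space H_w with weight w(x) = e^{α x}). -/

import Mathlib

open MeasureTheory

theorem stmt14 {d : ℕ} (α : ℝ) (hα : 0 < α)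
    (lam : Fin d → ℝ) (hmono : StrictMono lam) (hlt : ∀ j, lam j < -α / 2)
    (z : Fin d → ℝ) (hz : ∀ j, z j < 0)
    (f : ℝ → ℝ)
    (hf : ∀ x : ℝ, 0 ≤ x →
      f x = (∑ j, z j * lam j * Real.exp (lam j * x)) /
        (1 - ∑ j, z j * Real.exp (lam j * x))) :
    -- the denominator is bounded below by 1
    (∀ x : ℝ, 0 ≤ x → 1 ≤ 1 - ∑ j, z j * Real.exp (lam j * x)) ∧
    -- f is continuously differentiable on ℝ≥0
    ContDiffOn ℝ 1 f (Set.Ici 0) ∧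
    -- |f(0)|² + ∫₀^∞ |f′(x)|² e^{αx} dx < ∞
    ENNReal.ofReal (|f 0| ^ 2) +
        ∫⁻ x in Set.Ioi (0:ℝ),
          ENNReal.ofReal (|derivWithin f (Set.Ici 0) x| ^ 2 * Real.exp (α * x)) < ⊤ := by
  classical
  set N : ℝ → ℝ := fun x => ∑ j, z j * lam j * Real.exp (lam j * x) with hNdef
  set D : ℝ → ℝ := fun x => 1 - ∑ j, z j * Real.exp (lam j * x) with hDdef
  set N' : ℝ → ℝ := fun x => ∑ j, z j * lam j * (lam j * Real.exp (lam j * x)) with hN'def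
  have hD1 : ∀ x : ℝ, 1 ≤ D x := by
    intro x
    have h : ∑ j, z j * Real.exp (lam j * x) ≤ 0 :=
      Finset.sum_nonpos fun j _ =>
        mul_nonpos_of_nonpos_of_nonneg (hz j).le (Real.exp_pos _).le
    simp only [hDdef]
    linarith
  have hD0 : ∀ x : ℝ, D x ≠ 0 := fun x => by have := hD1 x; positivity
  -- smoothness
  have hexp : ∀ j : Fin d, ContDiff ℝ ⊤ (fun x : ℝ => Real.exp (lam j * x)) :=
    fun j => Real.contDiff_exp.comp (contDiff_const.mul contDiff_id)
  have hNc : ContDiff ℝ ⊤ N := by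
    apply ContDiff.sum
    intro j _
    exact contDiff_const.mul (hexp j)
  have hDc : ContDiff ℝ ⊤ D := by
    apply ContDiff.sub contDiff_const
    apply ContDiff.sum
    intro j _
    exact contDiff_const.mul (hexp j)
  set g : ℝ → ℝ := fun x => N x / D x with hgdef
  have hgc : ContDiff ℝ ⊤ g := hNc.div hDc hD0
  have hfeq : Set.EqOn f g (Set.Ici 0) := fun x hx => hf x hx
  -- derivatives
  have hNd : ∀ x : ℝ, HasDerivAt N (N' x) x := by
    intro x
    apply HasDerivAt.fun_sum
    intro j _
    have h1 : HasDerivAt (fun y : ℝ => Real.exp (lam j * y))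
        (lam j * Real.exp (lam j * x)) x := by
      have := ((hasDerivAt_id x).const_mul (lam j)).exp
      simpa [mul_comm] using this
    simpa [mul_assoc] using h1.const_mul (z j * lam j)
  have hDd : ∀ x : ℝ, HasDerivAt D (-(N x)) x := by
    intro x
    have h : HasDerivAt (fun y => ∑ j, z j * Real.exp (lam j * y)) (N x) x := by
      apply HasDerivAt.fun_sum
      intro j _
      have h1 : HasDerivAt (fun y : ℝ => Real.exp (lam j * y))
          (lam j * Real.exp (lam j * x)) x := by
        have := ((hasDerivAt_id x).const_mul (lam j)).exp
        simpa [mul_comm] using this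
      simpa [mul_assoc, mul_left_comm, mul_comm] using h1.const_mul (z j)
    simpa using (hasDerivAt_const x (1:ℝ)).fun_sub h
  have hgd : ∀ x : ℝ, HasDerivAt g ((N' x * D x + N x ^ 2) / D x ^ 2) x := by
    intro x
    have := (hNd x).fun_div (hDd x) (hD0 x)
    rw [show (N' x * D x + N x ^ 2) / D x ^ 2 = (N' x * D x - N x * -N x) / D x ^ 2 by ring]
    exact this
  -- choose m
  obtain ⟨m, hm, hle⟩ : ∃ m : ℝ, m < -α / 2 ∧ ∀ j, lam j ≤ m := by
    rcases Nat.eq_zero_or_pos d with hd | hd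
    · subst hd
      exact ⟨-α, by linarith, fun j => j.elim0⟩
    · have hne : (Finset.univ : Finset (Fin d)).Nonempty := by
        simpa [Finset.univ_nonempty_iff] using Fin.pos_iff_nonempty.mp hd
      refine ⟨Finset.univ.sup' hne lam, ?_, fun j => Finset.le_sup' lam (Finset.mem_univ j)⟩
      exact (Finset.sup'_lt_iff hne).mpr fun j _ => hlt j
  have hm0 : m < 0 := by linarith
  set A : ℝ := ∑ j, |z j * lam j| with hAdef
  set B : ℝ := ∑ j, |z j * lam j * lam j| with hBdef
  have hNb : ∀ x : ℝ, 0 ≤ x → |N x| ≤ A * Real.exp (m * x) := by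
    intro x hx
    calc |N x| ≤ ∑ j, |z j * lam j * Real.exp (lam j * x)| :=
          Finset.abs_sum_le_sum_abs _ _
      _ ≤ ∑ j, |z j * lam j| * Real.exp (m * x) := by
          apply Finset.sum_le_sum
          intro j _
          rw [abs_mul, Real.abs_exp]
          exact mul_le_mul_of_nonneg_left
            (Real.exp_le_exp.mpr (mul_le_mul_of_nonneg_right (hle j) hx)) (abs_nonneg _)
      _ = A * Real.exp (m * x) := by rw [hAdef, Finset.sum_mul]
  have hN'b : ∀ x : ℝ, 0 ≤ x → |N' x| ≤ B * Real.exp (m * x) := by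
    intro x hx
    calc |N' x| ≤ ∑ j, |z j * lam j * (lam j * Real.exp (lam j * x))| :=
          Finset.abs_sum_le_sum_abs _ _
      _ ≤ ∑ j, |z j * lam j * lam j| * Real.exp (m * x) := by
          apply Finset.sum_le_sum
          intro j _
          rw [show z j * lam j * (lam j * Real.exp (lam j * x)) =
            z j * lam j * lam j * Real.exp (lam j * x) by ring, abs_mul, Real.abs_exp]
          exact mul_le_mul_of_nonneg_left
            (Real.exp_le_exp.mpr (mul_le_mul_of_nonneg_right (hle j) hx)) (abs_nonneg _)
      _ = B * Real.exp (m * x) := by rw [hBdef, Finset.sum_mul]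
  have hA0 : 0 ≤ A := Finset.sum_nonneg fun j _ => abs_nonneg _
  have hB0 : 0 ≤ B := Finset.sum_nonneg fun j _ => abs_nonneg _
  set K : ℝ := B + A ^ 2 with hKdef
  have hK0 : 0 ≤ K := by positivity
  -- bound on the derivative of g
  have hgb : ∀ x : ℝ, 0 ≤ x → |deriv g x| ≤ K * Real.exp (m * x) := by
    intro x hx
    rw [(hgd x).deriv]
    have hDx := hD1 x
    have hexp1 : Real.exp (m * x) ≤ 1 := by
      rw [← Real.exp_zero]
      exact Real.exp_le_exp.mpr (by nlinarith)
    have hexp0 : (0:ℝ) < Real.exp (m * x) := Real.exp_pos _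
    have h1 : |(N' x * D x + N x ^ 2) / D x ^ 2| ≤ |N' x| + N x ^ 2 := by
      rw [abs_div, abs_of_pos (by positivity : (0:ℝ) < D x ^ 2),
        div_le_iff₀ (by positivity : (0:ℝ) < D x ^ 2)]
      have htri : |N' x * D x + N x ^ 2| ≤ |N' x| * D x + N x ^ 2 := by
        calc |N' x * D x + N x ^ 2| ≤ |N' x * D x| + |N x ^ 2| := abs_add_le _ _
          _ = |N' x| * D x + N x ^ 2 := by
              rw [abs_mul, abs_of_pos (by linarith : (0:ℝ) < D x),
                abs_of_nonneg (sq_nonneg (N x))]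
      have hD2 : D x ≤ D x ^ 2 := by nlinarith
      have h5 : |N' x| * D x ≤ |N' x| * D x ^ 2 :=
        mul_le_mul_of_nonneg_left hD2 (abs_nonneg _)
      have h6 : N x ^ 2 ≤ N x ^ 2 * D x ^ 2 :=
        le_mul_of_one_le_right (sq_nonneg _) (by nlinarith)
      nlinarith [abs_nonneg (N' x), sq_nonneg (N x)]
    have h2 : N x ^ 2 ≤ A ^ 2 * Real.exp (m * x) := by
      have := hNb x hx
      nlinarith [abs_nonneg (N x), sq_abs (N x)]
    have h3 := hN'b x hx
    calc |(N' x * D x + N x ^ 2) / D x ^ 2| ≤ |N' x| + N x ^ 2 := h1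
      _ ≤ B * Real.exp (m * x) + A ^ 2 * Real.exp (m * x) := by linarith
      _ = K * Real.exp (m * x) := by rw [hKdef]; ring
  refine ⟨fun x _ => hD1 x, (hgc.of_le le_top).contDiffOn.congr hfeq, ?_⟩
  have hcm : (0:ℝ) < -(2 * m + α) := by linarith
  have hint : IntegrableOn (fun x : ℝ => K ^ 2 * Real.exp (-(-(2 * m + α)) * x))
      (Set.Ioi (0:ℝ)) := (exp_neg_integrableOn_Ioi 0 hcm).const_mul _
  have hbound : ∀ x ∈ Set.Ioi (0:ℝ),
      |derivWithin f (Set.Ici 0) x| ^ 2 * Real.exp (α * x) ≤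
        K ^ 2 * Real.exp (-(-(2 * m + α)) * x) := by
    intro x hx
    have hx0 : (0:ℝ) < x := hx
    have hdw : derivWithin f (Set.Ici 0) x = deriv g x := by
      rw [derivWithin_congr hfeq (hfeq (le_of_lt hx0))]
      exact derivWithin_of_mem_nhds (Ici_mem_nhds hx0)
    rw [hdw]
    have h2 : |deriv g x| ^ 2 ≤ (K * Real.exp (m * x)) ^ 2 :=
      pow_le_pow_left₀ (abs_nonneg _) (hgb x hx0.le) 2
    calc |deriv g x| ^ 2 * Real.exp (α * x)
        ≤ (K * Real.exp (m * x)) ^ 2 * Real.exp (α * x) :=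
          mul_le_mul_of_nonneg_right h2 (Real.exp_pos _).le
      _ = K ^ 2 * Real.exp (-(-(2 * m + α)) * x) := by
          rw [mul_pow, sq (Real.exp (m * x)), ← Real.exp_add, mul_assoc, ← Real.exp_add]
          congr 1
          ring
  have hlint : (∫⁻ x in Set.Ioi (0:ℝ),
      ENNReal.ofReal (|derivWithin f (Set.Ici 0) x| ^ 2 * Real.exp (α * x))) < ⊤ := by
    calc (∫⁻ x in Set.Ioi (0:ℝ),
        ENNReal.ofReal (|derivWithin f (Set.Ici 0) x| ^ 2 * Real.exp (α * x)))
        ≤ ∫⁻ x in Set.Ioi (0:ℝ),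
          ENNReal.ofReal (K ^ 2 * Real.exp (-(-(2 * m + α)) * x)) := by
          refine lintegral_mono_ae ?_
          filter_upwards [self_mem_ae_restrict measurableSet_Ioi] with x hx
          exact ENNReal.ofReal_le_ofReal (hbound x hx)
      _ < ⊤ := hint.lintegral_lt_top
  exact ENNReal.add_lt_top.mpr ⟨ENNReal.ofReal_lt_top, hlint⟩
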